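/- Let (f_r) be a family with each f_r (r,s)-even and r ↦ f_r(n) multiplicative for fixed n. Then r ↦ f̂_r(n) is multiplicative: f̂_{qr}(n) = f̂_q(n) f̂_r(n) whenever gcd(q,r) = 1, where f̂_r(n) = Σ_{k=1}^{r^s} f_r(k) e^{-2πikn/r^s}. -/

import Mathlib

open Finset

/-- The generalized gcd `(a,b)_s`: the largest `s`-th power dividing both `a` and `b`. -/
noncomputable def ggcd (s a b : ℕ) : ℕ :=
  sSup {m : ℕ | (∃ l : ℕ, m = l ^ s) ∧ m ∣ a ∧ m ∣ b}

/-- The generalized Ramanujan sum `c_{r,s}(n)`. -/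
noncomputable def crs (s r n : ℕ) : ℂ :=
  ∑ j ∈ Finset.Icc 1 (r ^ s),
    if ggcd s j (r ^ s) = 1 then Complex.exp (2 * Real.pi * Complex.I * n * j / (r ^ s)) else 0

/-- The discrete Fourier transform of an `r^s`-periodic function. -/
noncomputable def dft (s r : ℕ) (f : ℕ → ℂ) (n : ℕ) : ℂ :=
  ∑ k ∈ Finset.Icc 1 (r ^ s), f k * Complex.exp (-(2 * Real.pi * Complex.I * k * n / (r ^ s)))

/-- A function is `(r,s)`-even if `f(n) = f((n, r^s)_s)` for all `n`. -/
def IsRSEven (s r : ℕ) (f : ℕ → ℂ) : Prop := ∀ n, f n = f (ggcd s n (r ^ s))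

lemma ggcd_congr (s M k a : ℕ) (h : ∀ m, m ∣ M → (m ∣ k ↔ m ∣ a)) :
    ggcd s k M = ggcd s a M := by
  unfold ggcd
  congr 1
  ext m
  exact ⟨fun ⟨hl, hk, hM⟩ => ⟨hl, (h m hM).mp hk, hM⟩,
         fun ⟨hl, hk, hM⟩ => ⟨hl, (h m hM).mpr hk, hM⟩⟩

lemma sum_Icc_eq_zmod (P : ℕ) [NeZero P] (h : ℕ → ℂ) (hper : Function.Periodic h P) :
    ∑ k ∈ Icc 1 P, h k = ∑ z : ZMod P, h z.val := by
  have hP : 0 < P := Nat.pos_of_ne_zero (NeZero.ne P)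
  have hz : ∑ z : ZMod P, h z.val = ∑ k ∈ range P, h k := by
    obtain ⟨P', rfl⟩ := Nat.exists_eq_succ_of_ne_zero hP.ne'
    exact Fin.sum_univ_eq_sum_range (fun i => h i) (P'+1)
  have h0 : h P = h 0 := by simpa using hper 0
  have h1 : ∑ k ∈ range (P+1), h k = ∑ k ∈ range P, h k + h P := Finset.sum_range_succ h P
  have h2 : ∑ k ∈ range (P+1), h k = h 0 + ∑ k ∈ Icc 1 P, h k := by
    rw [Finset.range_eq_Ico, Finset.sum_eq_sum_Ico_succ_bot (by omega)]
    rw [← Finset.Ico_add_one_right_eq_Icc]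
  rw [hz]
  rw [h1, h0] at h2
  linear_combination -h2

lemma term_periodic (s t n P : ℕ) (ht : 0 < t) (hP : P = t ^ s) (f : ℕ → ℂ)
    (he : IsRSEven s t f) :
    Function.Periodic
      (fun k => f k * Complex.exp (-(2 * Real.pi * Complex.I * k * n / (P : ℂ)))) P := by
  subst hP
  intro k
  have htC : (t : ℂ) ≠ 0 := Nat.cast_ne_zero.mpr ht.ne'
  have h1 : f (k + t ^ s) = f k := by
    rw [he (k + t ^ s), he k]
    congr 1
    apply ggcd_congr
    intro m hm
    exact ⟨fun h2 => by simpa using Nat.dvd_sub h2 hm, fun h2 => dvd_add h2 hm⟩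
  have h2 : (-(2 * Real.pi * Complex.I * ((k + t ^ s : ℕ) : ℂ) * n / ((t ^ s : ℕ) : ℂ))) =
      -(2 * Real.pi * Complex.I * (k : ℂ) * n / ((t ^ s : ℕ) : ℂ))
        + ((-(n:ℤ) : ℤ) : ℂ) * (2 * Real.pi * Complex.I) := by
    push_cast
    field_simp
    ring
  simp only
  rw [h1, h2, Complex.exp_add, Complex.exp_int_mul_two_pi_mul_I, mul_one]

lemma dft_eq (s t n P : ℕ) [NeZero P] (ht : 0 < t) (hP : P = t ^ s) (f : ℕ → ℂ) (he : IsRSEven s t f) :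
    dft s t f n =
      ∑ z : ZMod P, f z.val *
        Complex.exp (-(2 * Real.pi * Complex.I * z.val * n / (P : ℂ))) := by
  have hper := term_periodic s t n P ht hP f he
  subst hP
  haveI : NeZero (t ^ s) := ⟨(pow_pos ht s).ne'⟩
  have hc : ((t : ℂ)) ^ s = ((t ^ s : ℕ) : ℂ) := by push_cast; ring
  rw [dft]
  simp_rw [hc]
  exact sum_Icc_eq_zmod (t ^ s) _ hper


theorem stmt16 (s : ℕ) (hs : 0 < s) (f : ℕ → ℕ → ℂ)
    (heven : ∀ r : ℕ, 0 < r → IsRSEven s r (f r))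
    (hmult : ∀ q r n : ℕ, 0 < q → 0 < r → Nat.Coprime q r → f (q * r) n = f q n * f r n) :
    ∀ q r n : ℕ, 0 < q → 0 < r → Nat.Coprime q r →
      dft s (q * r) (f (q * r)) n = dft s q (f q) n * dft s r (f r) n := by
  intro q r n hq hr hqr
  have hM : 0 < q ^ s := pow_pos hq s
  have hN : 0 < r ^ s := pow_pos hr s
  haveI : NeZero (q ^ s) := ⟨hM.ne'⟩
  haveI : NeZero (r ^ s) := ⟨hN.ne'⟩
  haveI : NeZero (q ^ s * r ^ s) := ⟨(Nat.mul_pos hM hN).ne'⟩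
  have hcop : Nat.Coprime (q ^ s) (r ^ s) := Nat.Coprime.pow s s hqr
  rw [dft_eq s q n (q ^ s) hq rfl (f q) (heven q hq),
      dft_eq s r n (r ^ s) hr rfl (f r) (heven r hr),
      dft_eq s (q * r) n (q ^ s * r ^ s) (Nat.mul_pos hq hr) (mul_pow q r s).symm (f (q * r))
        (heven (q * r) (Nat.mul_pos hq hr))]
  rw [Fintype.sum_mul_sum]
  -- the CRT-style bijection
  set π : ZMod (q ^ s) × ZMod (r ^ s) → ZMod (q ^ s * r ^ s) :=
    fun p => ((p.1.val * r ^ s + p.2.val * q ^ s : ℕ) : ZMod (q ^ s * r ^ s)) with hπ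
  have hinj : Function.Injective π := by
    intro p₁ p₂ hpe
    have e1 := congrArg (ZMod.castHom (dvd_mul_right (q ^ s) (r ^ s)) (ZMod (q ^ s))) hpe
    have e2 := congrArg (ZMod.castHom (dvd_mul_left (r ^ s) (q ^ s)) (ZMod (r ^ s))) hpe
    simp only [hπ, map_natCast] at e1 e2
    simp only [Nat.cast_add, Nat.cast_mul, ZMod.natCast_self, mul_zero, add_zero,
      zero_mul, zero_add, ZMod.natCast_val, ZMod.cast_id] at e1 e2
    have hu1 : IsUnit ((r ^ s : ℕ) : ZMod (q ^ s)) := by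
      rw [← ZMod.coe_unitOfCoprime (r ^ s) hcop.symm]; exact Units.isUnit _
    have hu2 : IsUnit ((q ^ s : ℕ) : ZMod (r ^ s)) := by
      rw [← ZMod.coe_unitOfCoprime (q ^ s) hcop]; exact Units.isUnit _
    have h1 : p₁.1 = p₂.1 := hu1.mul_right_cancel (by simpa using e1)
    have h2 : p₁.2 = p₂.2 := hu2.mul_right_cancel (by simpa using e2)
    exact Prod.ext h1 h2
  have hbij : Function.Bijective π :=
    (Fintype.bijective_iff_injective_and_card π).mpr ⟨hinj, by simp [ZMod.card]⟩
  have hTper := term_periodic s (q * r) n (q ^ s * r ^ s) (Nat.mul_pos hq hr)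
    (mul_pow q r s).symm (f (q * r)) (heven (q * r) (Nat.mul_pos hq hr))
  have hterm : ∀ p : ZMod (q ^ s) × ZMod (r ^ s),
      (f q p.1.val * Complex.exp (-(2 * Real.pi * Complex.I * p.1.val * n / ((q ^ s : ℕ) : ℂ)))) *
      (f r p.2.val * Complex.exp (-(2 * Real.pi * Complex.I * p.2.val * n / ((r ^ s : ℕ) : ℂ)))) =
      f (q * r) (π p).val *
        Complex.exp (-(2 * Real.pi * Complex.I * (π p).val * n / ((q ^ s * r ^ s : ℕ) : ℂ))) := by
    rintro ⟨x, y⟩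
    set a := x.val
    set b := y.val
    have hval : (π (x, y)).val = (a * r ^ s + b * q ^ s) % (q ^ s * r ^ s) :=
      ZMod.val_natCast _ _
    have hstep : f (q * r) (π (x, y)).val *
        Complex.exp (-(2 * Real.pi * Complex.I * ((π (x, y)).val : ℂ) * n /
          ((q ^ s * r ^ s : ℕ) : ℂ))) =
        f (q * r) (a * r ^ s + b * q ^ s) *
        Complex.exp (-(2 * Real.pi * Complex.I * ((a * r ^ s + b * q ^ s : ℕ) : ℂ) * n /
          ((q ^ s * r ^ s : ℕ) : ℂ))) := by
      rw [hval]
      exact hTper.map_mod_nat _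
    rw [hstep]
    have hfq : f q (a * r ^ s + b * q ^ s) = f q a := by
      rw [heven q hq (a * r ^ s + b * q ^ s), heven q hq a]
      congr 1
      apply ggcd_congr
      intro m hm
      have hcm : Nat.Coprime m (r ^ s) := Nat.Coprime.coprime_dvd_left hm hcop
      constructor
      · intro h2
        have h3 : m ∣ a * r ^ s := by simpa using Nat.dvd_sub h2 (Dvd.dvd.mul_left hm b)
        exact hcm.dvd_of_dvd_mul_right h3
      · intro h2
        exact dvd_add (Dvd.dvd.mul_right h2 _) (Dvd.dvd.mul_left hm b)
    have hfr : f r (a * r ^ s + b * q ^ s) = f r b := by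
      rw [heven r hr (a * r ^ s + b * q ^ s), heven r hr b]
      congr 1
      apply ggcd_congr
      intro m hm
      have hcm : Nat.Coprime m (q ^ s) := Nat.Coprime.coprime_dvd_left hm hcop.symm
      constructor
      · intro h2
        have h3 : m ∣ b * q ^ s := by simpa using Nat.dvd_sub h2 (Dvd.dvd.mul_left hm a)
        exact hcm.dvd_of_dvd_mul_right h3
      · intro h2
        exact dvd_add (Dvd.dvd.mul_left hm a) (Dvd.dvd.mul_right h2 _)
    rw [hmult q r _ hq hr hqr, hfq, hfr]
    have hqC : (q : ℂ) ≠ 0 := Nat.cast_ne_zero.mpr hq.ne'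
    have hrC : (r : ℂ) ≠ 0 := Nat.cast_ne_zero.mpr hr.ne'
    have hexp : -(2 * Real.pi * Complex.I * (a : ℂ) * n / ((q ^ s : ℕ) : ℂ)) +
        -(2 * Real.pi * Complex.I * (b : ℂ) * n / ((r ^ s : ℕ) : ℂ)) =
        -(2 * Real.pi * Complex.I * ((a * r ^ s + b * q ^ s : ℕ) : ℂ) * n /
          ((q ^ s * r ^ s : ℕ) : ℂ)) := by
      push_cast
      field_simp
      ring
    rw [← hexp, Complex.exp_add]
    ring
  exact ((Fintype.sum_bijective π hbij _ _ (fun p => hterm p)).symm.trans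
    (Fintype.sum_prod_type _))
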